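/- If P is a complex polynomial of degree n having no zeros in the open unit disk, then the maximum of |P'| on the unit circle is at most (n/2)(M − m), where M = max_{|z|=1}|P(z)| and m = min_{|z|=1}|P(z)|. -/

import Mathlib

open Polynomial Metric Set

lemma re_half (z r : ℂ) (hz : ‖z‖ = 1) (hr : 1 ≤ ‖r‖) (hne : z ≠ r) :
    (z / (z - r)).re ≤ 1/2 := by
  have hd : z - r ≠ 0 := sub_ne_zero.mpr hne
  have hns : 0 < Complex.normSq (z - r) := Complex.normSq_pos.mpr hd
  have h1 : Complex.normSq z = 1 := by
    have := Complex.sq_norm z; rw [hz] at this; simpa using this.symm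
  have h2 : 1 ≤ Complex.normSq r := by nlinarith [Complex.sq_norm r]
  have key : (z * (starRingEnd ℂ) (z - r)).re ≤ Complex.normSq (z - r) / 2 := by
    have e1 : z * (starRingEnd ℂ) (z - r) = Complex.normSq z - z * (starRingEnd ℂ) r := by
      rw [map_sub, mul_sub, Complex.mul_conj]
    rw [e1, Complex.normSq_sub]
    simp only [Complex.sub_re, Complex.ofReal_re, h1]
    linarith
  rw [div_eq_mul_inv, Complex.inv_def, ← mul_assoc, Complex.mul_re]
  simp only [Complex.ofReal_re, Complex.ofReal_im, Complex.inv_re, Complex.inv_im, mul_zero,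
    sub_zero]
  calc (z * (starRingEnd ℂ) (z - r)).re * (Complex.normSq (z-r))⁻¹
      ≤ (Complex.normSq (z-r) / 2) * (Complex.normSq (z-r))⁻¹ := by
        apply mul_le_mul_of_nonneg_right key (by positivity)
    _ = 1/2 := by field_simp

lemma eval_prod_ne_zero (s : Multiset ℂ) (z : ℂ) (hne : ∀ r ∈ s, z ≠ r) :
    eval z (s.map (fun r => X - C r)).prod ≠ 0 := by
  rw [eval_multiset_prod]
  apply Multiset.prod_ne_zero
  intro h0
  rw [Multiset.mem_map] at h0
  obtain ⟨f, hf⟩ := h0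
  rw [Multiset.mem_map] at hf
  obtain ⟨⟨r, hr, rfl⟩, h2⟩ := hf
  simp at h2
  exact hne r hr (sub_eq_zero.mp h2)

lemma logderiv_re_le (s : Multiset ℂ) (z : ℂ) (hz : ‖z‖ = 1)
    (hs : ∀ r ∈ s, 1 ≤ ‖r‖) (hne : ∀ r ∈ s, z ≠ r) :
    (z * eval z (derivative (s.map (fun r => X - C r)).prod) /
      eval z (s.map (fun r => X - C r)).prod).re ≤ (Multiset.card s : ℝ) / 2 := by
  induction s using Multiset.induction with
  | empty => simp
  | cons r t ih =>
      have hzr : z ≠ r := hne r (Multiset.mem_cons_self r t)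
      have hd : z - r ≠ 0 := sub_ne_zero.mpr hzr
      have htne : ∀ x ∈ t, z ≠ x := fun x hx => hne x (Multiset.mem_cons_of_mem hx)
      have hT : eval z (t.map (fun r => X - C r)).prod ≠ 0 := eval_prod_ne_zero t z htne
      rw [Multiset.map_cons, Multiset.prod_cons, derivative_mul]
      have e : z * eval z (derivative (X - C r) * (t.map (fun r => X - C r)).prod
            + (X - C r) * derivative (t.map (fun r => X - C r)).prod) /
            eval z ((X - C r) * (t.map (fun r => X - C r)).prod)
          = z / (z - r) + z * eval z (derivative (t.map (fun r => X - C r)).prod) /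
            eval z (t.map (fun r => X - C r)).prod := by
        simp only [eval_add, eval_mul, eval_sub, eval_X, eval_C, derivative_sub, derivative_X,
          derivative_C, sub_zero, eval_one, one_mul]
        field_simp
      rw [e, Complex.add_re, Multiset.card_cons]
      push_cast
      have := re_half z r hz (hs r (Multiset.mem_cons_self r t)) hzr
      have h2 := ih (fun x hx => hs x (Multiset.mem_cons_of_mem hx)) htne
      linarith

lemma L2 (H : Polynomial ℂ) (hH : ∀ w : ℂ, ‖w‖ < 1 → H.eval w ≠ 0)
    (N : ℕ) (hN : H.natDegree ≤ N) (z : ℂ) (hz : ‖z‖ = 1) :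
    ‖(derivative H).eval z‖ ≤
      ‖(N : ℂ) * H.eval z - z * (derivative H).eval z‖ := by
  by_cases h0 : H.eval z = 0
  · rw [h0, mul_zero, zero_sub, norm_neg, norm_mul, hz, one_mul]
  have hHne : H ≠ 0 := fun h => h0 (by simp [h])
  have hsplit := IsAlgClosed.splits H
  have hfact := hsplit.eq_prod_roots
  have hcard : (Multiset.card H.roots : ℝ) = (H.natDegree : ℝ) := by
    exact_mod_cast congrArg Nat.cast (splits_iff_card_roots.mp hsplit)
  have hroots1 : ∀ r ∈ H.roots, 1 ≤ ‖r‖ := by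
    intro r hr
    by_contra h
    exact hH r (lt_of_not_ge h) ((mem_roots hHne).mp hr)
  have hnez : ∀ r ∈ H.roots, z ≠ r := by
    rintro r hr rfl
    exact h0 ((mem_roots hHne).mp hr)
  set T := (H.roots.map (fun r => X - C r)).prod with hT
  have hTne : eval z T ≠ 0 := eval_prod_ne_zero _ z hnez
  have hlc : H.leadingCoeff ≠ 0 := leadingCoeff_ne_zero.mpr hHne
  -- w = z * H'(z)/H(z)
  set w := z * eval z (derivative T) / eval z T with hw
  have hrew : w = z * (derivative H).eval z / H.eval z := by
    rw [hw, hfact]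
    rw [derivative_C_mul, eval_mul, eval_mul, eval_C]
    field_simp
  have hre : w.re ≤ (N : ℝ) / 2 := by
    refine le_trans (logderiv_re_le H.roots z hz hroots1 hnez) ?_
    rw [hcard]
    have : (H.natDegree : ℝ) ≤ N := by exact_mod_cast hN
    linarith
  -- |w| ≤ |N - w|
  have habs : ‖w‖ ≤ ‖(N : ℂ) - w‖ := by
    have h1 : Complex.normSq w ≤ Complex.normSq ((N:ℂ) - w) := by
      simp only [Complex.normSq_apply, Complex.sub_re, Complex.sub_im, Complex.natCast_re,
        Complex.natCast_im, zero_sub, neg_mul, neg_neg]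
      have hN0 : (0:ℝ) ≤ (N:ℝ) := Nat.cast_nonneg N
      nlinarith
    rw [Complex.norm_def, Complex.norm_def]
    exact Real.sqrt_le_sqrt h1
  -- multiply by |H(z)|
  have e1 : z * (derivative H).eval z = w * H.eval z := by
    rw [hrew]; field_simp
  have e2 : (N : ℂ) * H.eval z - z * (derivative H).eval z = ((N:ℂ) - w) * H.eval z := by
    rw [e1]; ring
  calc ‖(derivative H).eval z‖
      = ‖z * (derivative H).eval z‖ := by rw [norm_mul, hz, one_mul]
    _ = ‖w‖ * ‖H.eval z‖ := by rw [e1, norm_mul]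
    _ ≤ ‖(N:ℂ) - w‖ * ‖H.eval z‖ := by
        apply mul_le_mul_of_nonneg_right habs (norm_nonneg _)
    _ = ‖(N : ℂ) * H.eval z - z * (derivative H).eval z‖ := by rw [e2, norm_mul]

lemma conj_eq_inv (z : ℂ) (hz : ‖z‖ = 1) : (starRingEnd ℂ) z = z⁻¹ := by
  have h1 : z * (starRingEnd ℂ) z = 1 := by
    rw [Complex.mul_conj]
    norm_cast
    have := Complex.sq_norm z; rw [hz] at this; simpa using this.symm
  exact eq_inv_of_mul_eq_one_right h1

lemma reflect_deriv_eval (n : ℕ) (R : Polynomial ℂ) (hR : R.natDegree ≤ n)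
    (z : ℂ) (hz : ‖z‖ = 1) :
    eval z (derivative (reflect n (R.map (starRingEnd ℂ)))) =
      z ^ (n - 1) * (starRingEnd ℂ) ((n : ℂ) * R.eval z - z * (derivative R).eval z) := by
  have hz0 : z ≠ 0 := by intro h; rw [h] at hz; simp at hz
  set L : Polynomial ℂ → ℂ :=
    fun S => eval z (derivative (reflect n (S.map (starRingEnd ℂ)))) with hL
  set Rh : Polynomial ℂ → ℂ :=
    fun S => z ^ (n - 1) * (starRingEnd ℂ) ((n : ℂ) * S.eval z - z * (derivative S).eval z)
    with hRh
  have Ladd : ∀ p q, L (p + q) = L p + L q := by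
    intro p q
    simp [hL, Polynomial.map_add, reflect_add, derivative_add, eval_add]
  have Rhadd : ∀ p q, Rh (p + q) = Rh p + Rh q := by
    intro p q
    simp only [hRh, eval_add, derivative_add]
    rw [← mul_add, ← map_add]
    ring_nf
  have hmono : ∀ i : ℕ, i ≤ n → ∀ a : ℂ, L (monomial i a) = Rh (monomial i a) := by
    intro i hi a
    have e1 : (monomial i a).map (starRingEnd ℂ) = C ((starRingEnd ℂ) a) * X ^ i := by
      rw [map_monomial, ← C_mul_X_pow_eq_monomial]
    have e2 : reflect n (C ((starRingEnd ℂ) a) * X ^ i)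
        = C ((starRingEnd ℂ) a) * X ^ (n - i) := by
      rw [reflect_C_mul, reflect_monomial, revAt_le hi]
    have eL : L (monomial i a) = (starRingEnd ℂ) a * ((n - i : ℕ) : ℂ) * z ^ (n - i - 1) := by
      simp only [hL, e1, e2]
      rw [derivative_C_mul, derivative_X_pow]
      simp only [eval_mul, eval_C, eval_natCast, eval_pow, eval_X]
      ring
    have aux : (n : ℂ) * eval z (monomial i a) - z * eval z (derivative (monomial i a))
        = ((n : ℂ) - (i : ℂ)) * (a * z ^ i) := by
      rw [derivative_monomial]
      simp only [eval_monomial]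
      cases i with
      | zero => simp
      | succ k =>
          push_cast
          rw [pow_succ]
          ring
    have eR : Rh (monomial i a) =
        z ^ (n - 1) * (((n : ℂ) - (i : ℂ)) * ((starRingEnd ℂ) a * (z⁻¹) ^ i)) := by
      simp only [hRh, aux]
      rw [map_mul, map_mul, map_sub, map_natCast, map_natCast, map_pow, conj_eq_inv z hz]
    rw [eL, eR]
    rcases eq_or_lt_of_le hi with rfl | hilt
    · simp
    · have h1 : ((n - i : ℕ) : ℂ) = (n : ℂ) - (i : ℂ) := by
        push_cast [Nat.cast_sub hi]; ring
      have h2 : z ^ (n - 1) = z ^ (n - 1 - i) * z ^ i := by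
        rw [← pow_add, Nat.sub_add_cancel (by omega)]
      have h3 : n - 1 - i = n - i - 1 := by omega
      rw [h1, h2, h3]
      field_simp
      have hzi : z ^ i * z⁻¹ ^ i = 1 := by rw [← mul_pow, mul_inv_cancel₀ hz0, one_pow]
      linear_combination (-(starRingEnd ℂ) a * ↑n + (starRingEnd ℂ) a * ↑i) * hzi
  -- now sum over monomials
  have hsum := Polynomial.as_sum_range' R (n + 1) (Nat.lt_succ_of_le hR)
  have lsum : ∀ (f : ℕ → Polynomial ℂ) (s : Finset ℕ), L (∑ i ∈ s, f i) = ∑ i ∈ s, L (f i) :=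
    fun f s => map_sum (AddMonoidHom.mk' L Ladd) f s
  have rsum : ∀ (f : ℕ → Polynomial ℂ) (s : Finset ℕ), Rh (∑ i ∈ s, f i) = ∑ i ∈ s, Rh (f i) :=
    fun f s => map_sum (AddMonoidHom.mk' Rh Rhadd) f s
  show L R = Rh R
  rw [hsum, lsum, rsum]
  apply Finset.sum_congr rfl
  intro i hi
  exact hmono i (by simpa using Nat.lt_succ_iff.mp (Finset.mem_range.mp hi)) _

lemma poly_maxmod (R : Polynomial ℂ) (M : ℝ)
    (hb : ∀ w : ℂ, ‖w‖ = 1 → ‖R.eval w‖ ≤ M)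
    (w : ℂ) (hw : ‖w‖ ≤ 1) : ‖R.eval w‖ ≤ M := by
  have hU : Bornology.IsBounded (ball (0:ℂ) 1) := isBounded_ball
  have hd : DiffContOnCl ℂ (fun w => R.eval w) (ball (0:ℂ) 1) :=
    (R.differentiable.diffContOnCl)
  have hfr : ∀ z ∈ frontier (ball (0:ℂ) 1), ‖R.eval z‖ ≤ M := by
    intro z hzf
    rw [frontier_ball (0:ℂ) one_ne_zero] at hzf
    rw [mem_sphere_zero_iff_norm] at hzf
    exact hb z hzf
  have hcl : w ∈ closure (ball (0:ℂ) 1) := by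
    rw [closure_ball (0:ℂ) one_ne_zero, mem_closedBall_zero_iff]
    exact hw
  exact Complex.norm_le_of_forall_mem_frontier_norm_le hU hd hfr hcl

lemma poly_minmod (R : Polynomial ℂ) (m : ℝ) (hm : 0 < m)
    (hb : ∀ w : ℂ, ‖w‖ = 1 → m ≤ ‖R.eval w‖)
    (hne : ∀ w : ℂ, ‖w‖ ≤ 1 → R.eval w ≠ 0)
    (w : ℂ) (hw : ‖w‖ ≤ 1) : m ≤ ‖R.eval w‖ := by
  have hU : Bornology.IsBounded (ball (0:ℂ) 1) := isBounded_ball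
  have hd : DiffContOnCl ℂ (fun w => (R.eval w)⁻¹) (ball (0:ℂ) 1) := by
    constructor
    · apply DifferentiableOn.inv R.differentiable.differentiableOn
      intro x hx
      exact hne x (le_of_lt (by simpa [mem_ball_zero_iff] using hx))
    · apply ContinuousOn.inv₀ R.continuous.continuousOn
      intro x hx
      rw [closure_ball (0:ℂ) one_ne_zero, mem_closedBall_zero_iff] at hx
      exact hne x hx
  have hfr : ∀ z ∈ frontier (ball (0:ℂ) 1), ‖(R.eval z)⁻¹‖ ≤ m⁻¹ := by
    intro z hzf
    rw [frontier_ball (0:ℂ) one_ne_zero, mem_sphere_zero_iff_norm] at hzf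
    rw [norm_inv]
    exact inv_anti₀ hm (hb z hzf)
  have hcl : w ∈ closure (ball (0:ℂ) 1) := by
    rw [closure_ball (0:ℂ) one_ne_zero, mem_closedBall_zero_iff]; exact hw
  have := Complex.norm_le_of_forall_mem_frontier_norm_le hU hd hfr hcl
  rw [norm_inv] at this
  have hR0 : ‖R.eval w‖ ≠ 0 := by
    simpa [norm_eq_zero] using hne w hw
  have hRpos : 0 < ‖R.eval w‖ := by
    simpa [norm_pos_iff] using hne w hw
  calc m = (m⁻¹)⁻¹ := (inv_inv m).symm
    _ ≤ (‖R.eval w‖⁻¹)⁻¹ := by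
        apply inv_anti₀ (by positivity) this
    _ = ‖R.eval w‖ := inv_inv _

lemma exists_unit_dir (w : ℂ) : ∃ u : ℂ, ‖u‖ = 1 ∧ w = (‖w‖ : ℂ) * u := by
  by_cases hw : w = 0
  · exact ⟨1, by simp, by simp [hw]⟩
  · refine ⟨w / (‖w‖ : ℂ), ?_, ?_⟩
    · rw [norm_div, Complex.norm_real, Real.norm_eq_abs, abs_of_nonneg (norm_nonneg w), div_self]
      simpa [norm_eq_zero] using hw
    · have : (‖w‖ : ℂ) ≠ 0 := by
        simpa [Complex.ofReal_eq_zero, norm_eq_zero] using hw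
      field_simp

namespace AzizDawood

lemma img_compact (P : Polynomial ℂ) :
    IsCompact ((fun w => ‖P.eval w‖) '' sphere (0:ℂ) 1) :=
  (isCompact_sphere (0:ℂ) 1).image (continuous_norm.comp P.continuous_aeval)

lemma img_nonempty (P : Polynomial ℂ) :
    ((fun w => ‖P.eval w‖) '' sphere (0:ℂ) 1).Nonempty := by
  refine ⟨‖P.eval 1‖, 1, ?_, rfl⟩
  simp [mem_sphere_zero_iff_norm]

lemma mem_img (P : Polynomial ℂ) (w : ℂ) (hw : ‖w‖ = 1) :
    ‖P.eval w‖ ∈ ((fun w => ‖P.eval w‖) '' sphere (0:ℂ) 1) :=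
  ⟨w, by simpa [mem_sphere_zero_iff_norm] using hw, rfl⟩

end AzizDawood

lemma reflect_eval (n : ℕ) (R : Polynomial ℂ) (hR : R.natDegree ≤ n)
    (z : ℂ) (hz : ‖z‖ = 1) :
    eval z (reflect n (R.map (starRingEnd ℂ))) = z ^ n * (starRingEnd ℂ) (R.eval z) := by
  have hz0 : z ≠ 0 := by intro h; rw [h] at hz; simp at hz
  set L : Polynomial ℂ → ℂ := fun S => eval z (reflect n (S.map (starRingEnd ℂ))) with hL
  set Rh : Polynomial ℂ → ℂ := fun S => z ^ n * (starRingEnd ℂ) (S.eval z) with hRh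
  have Ladd : ∀ p q, L (p + q) = L p + L q := by
    intro p q; simp [hL, Polynomial.map_add, reflect_add, eval_add]
  have Rhadd : ∀ p q, Rh (p + q) = Rh p + Rh q := by
    intro p q; simp only [hRh, eval_add, map_add]; ring
  have hmono : ∀ i : ℕ, i ≤ n → ∀ a : ℂ, L (monomial i a) = Rh (monomial i a) := by
    intro i hi a
    have e1 : (monomial i a).map (starRingEnd ℂ) = C ((starRingEnd ℂ) a) * X ^ i := by
      rw [map_monomial, ← C_mul_X_pow_eq_monomial]
    have e2 : reflect n (C ((starRingEnd ℂ) a) * X ^ i)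
        = C ((starRingEnd ℂ) a) * X ^ (n - i) := by
      rw [reflect_C_mul, reflect_monomial, revAt_le hi]
    simp only [hL, hRh, e1, e2, eval_mul, eval_C, eval_pow, eval_X, eval_monomial]
    rw [map_mul, map_pow, conj_eq_inv z hz]
    have h2 : z ^ n = z ^ (n - i) * z ^ i := by rw [← pow_add, Nat.sub_add_cancel hi]
    rw [h2]
    field_simp
    rw [mul_assoc, ← mul_pow, mul_one_div_cancel hz0, one_pow, mul_one]
  have hsum := Polynomial.as_sum_range' R (n + 1) (Nat.lt_succ_of_le hR)
  have lsum : ∀ (f : ℕ → Polynomial ℂ) (s : Finset ℕ), L (∑ i ∈ s, f i) = ∑ i ∈ s, L (f i) :=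
    fun f s => map_sum (AddMonoidHom.mk' L Ladd) f s
  have rsum : ∀ (f : ℕ → Polynomial ℂ) (s : Finset ℕ), Rh (∑ i ∈ s, f i) = ∑ i ∈ s, Rh (f i) :=
    fun f s => map_sum (AddMonoidHom.mk' Rh Rhadd) f s
  show L R = Rh R
  rw [hsum, lsum, rsum]
  exact Finset.sum_congr rfl fun i hi =>
    hmono i (Nat.lt_succ_iff.mp (Finset.mem_range.mp hi)) _

lemma reflect_sub (n : ℕ) (p q : Polynomial ℂ) : reflect n (p - q) = reflect n p - reflect n q := by
  ext k
  simp [coeff_reflect, coeff_sub]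

lemma reflect_C' (n : ℕ) (c : ℂ) : reflect n (C c) = C c * X ^ n := by
  have : (C c : Polynomial ℂ) = C c * X ^ 0 := by simp
  rw [this, reflect_C_mul, reflect_monomial, revAt_le (Nat.zero_le n), Nat.sub_zero]
  simp

lemma natDegree_reflect_le (n : ℕ) (p : Polynomial ℂ) (hp : p.natDegree ≤ n) :
    (reflect n p).natDegree ≤ n := by
  apply natDegree_le_iff_coeff_eq_zero.mpr
  intro k hk
  rw [coeff_reflect]
  have : revAt n k = k := by
    exact revAt_eq_self_of_lt hk
  rw [this]
  exact coeff_eq_zero_of_natDegree_lt (lt_of_le_of_lt hp hk)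

lemma reflect_reflect (n : ℕ) (P : Polynomial ℂ) :
    reflect n ((reflect n (P.map (starRingEnd ℂ))).map (starRingEnd ℂ)) = P := by
  ext k
  simp [coeff_reflect, coeff_map, revAt_invol]

noncomputable def maxSphere (P : Polynomial ℂ) : ℝ :=
  sSup ((fun w => ‖P.eval w‖) '' sphere (0:ℂ) 1)

noncomputable def minSphere (P : Polynomial ℂ) : ℝ :=
  sInf ((fun w => ‖P.eval w‖) '' sphere (0:ℂ) 1)

theorem stmt_4 (n : ℕ) (P : Polynomial ℂ) (hP : P.natDegree = n)
    (hz : ∀ z : ℂ, ‖z‖ < 1 → P.eval z ≠ 0) :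
    ∀ z : ℂ, ‖z‖ = 1 →
      ‖(derivative P).eval z‖ ≤ (n / 2 : ℝ) * (maxSphere P - minSphere P) := by
  subst hP
  intro z hz1
  set M := maxSphere P with hMdef
  set m := minSphere P with hmdef
  have hbddA := (AzizDawood.img_compact P).bddAbove
  have hbddB := (AzizDawood.img_compact P).bddBelow
  have hMub : ∀ w : ℂ, ‖w‖ = 1 → ‖P.eval w‖ ≤ M :=
    fun w hw => le_csSup hbddA (AzizDawood.mem_img P w hw)
  have hmlb : ∀ w : ℂ, ‖w‖ = 1 → m ≤ ‖P.eval w‖ :=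
    fun w hw => csInf_le hbddB (AzizDawood.mem_img P w hw)
  have hm0 : 0 ≤ m := le_csInf (AzizDawood.img_nonempty P) (by
    rintro b ⟨w, _, rfl⟩; exact norm_nonneg _)
  have hone : ‖(1:ℂ)‖ = 1 := by simp
  have hMm : m ≤ M := le_trans (hmlb 1 hone) (hMub 1 hone)
  have hP0 : P.eval 0 ≠ 0 := hz 0 (by simp)
  by_cases hn0 : P.natDegree = 0
  · obtain ⟨c, hc⟩ : ∃ c, P = C c := ⟨P.coeff 0, Polynomial.eq_C_of_natDegree_eq_zero hn0⟩
    rw [hn0, hc]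
    simp
  have hn : 1 ≤ P.natDegree := Nat.one_le_iff_ne_zero.mpr hn0
  have hnR : (1:ℝ) ≤ (P.natDegree : ℝ) := by exact_mod_cast hn
  have hM0 : 0 < M :=
    lt_of_lt_of_le (norm_pos_iff.mpr hP0) (poly_maxmod P M hMub 0 (by simp))
  have hz0 : z ≠ 0 := by intro h; rw [h] at hz1; simp at hz1
  have hzpow : ‖z ^ (P.natDegree - 1)‖ = 1 := by rw [norm_pow, hz1, one_pow]
  have hzpow0 : z ^ (P.natDegree - 1) ≠ 0 := pow_ne_zero _ hz0
  set Q := reflect P.natDegree (P.map (starRingEnd ℂ)) with hQdef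
  have hQdeg : Q.natDegree ≤ P.natDegree :=
    natDegree_reflect_le _ _ natDegree_map_le
  have hQbound : ∀ w : ℂ, ‖w‖ ≤ 1 → ‖Q.eval w‖ ≤ M := by
    apply poly_maxmod
    intro w hw
    rw [hQdef, reflect_eval _ _ le_rfl w hw, norm_mul, norm_pow, hw, one_pow, one_mul,
      Complex.norm_conj]
    exact hMub w hw
  set A := ‖(derivative P).eval z‖ with hAdef
  set B := ‖(derivative Q).eval z‖ with hBdef
  have hA0 : 0 ≤ A := norm_nonneg _
  have hB0 : 0 ≤ B := norm_nonneg _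
  have hid1 := reflect_deriv_eval P.natDegree P le_rfl z hz1
  have hid2 : (derivative P).eval z = z ^ (P.natDegree - 1) *
      (starRingEnd ℂ) ((P.natDegree : ℂ) * Q.eval z - z * (derivative Q).eval z) := by
    have h := reflect_deriv_eval P.natDegree Q hQdeg z hz1
    rw [hQdef, reflect_reflect] at h
    exact h
  -- A ≤ B
  have hAB : A ≤ B := by
    have h := L2 P hz P.natDegree le_rfl z hz1
    have e : B = ‖(P.natDegree : ℂ) * P.eval z - z * (derivative P).eval z‖ := by
      rw [hBdef, hid1, norm_mul, hzpow, one_mul, Complex.norm_conj]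
    rw [e]; exact h
  -- key1
  have hnM0 : 0 < (P.natDegree : ℝ) * M := by positivity
  have key1 : ∀ s : ℝ, (P.natDegree : ℝ) * M < s → B ≤ |A - s| := by
    intro s hs
    have hs0 : 0 < s := lt_trans hnM0 hs
    obtain ⟨u, hu1, hPu⟩ := exists_unit_dir ((derivative P).eval z)
    rw [← hAdef] at hPu
    set c : ℂ := (s : ℂ) * u / ((P.natDegree : ℂ) * (M : ℂ) * z ^ (P.natDegree - 1)) with hcdef
    have hNne : ((P.natDegree : ℂ) * (M : ℂ) * z ^ (P.natDegree - 1)) ≠ 0 := by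
      apply mul_ne_zero (mul_ne_zero ?_ ?_) hzpow0
      · exact_mod_cast Nat.cast_ne_zero.mpr hn0
      · exact_mod_cast Complex.ofReal_ne_zero.mpr (ne_of_gt hM0)
    have habsc : ‖c‖ = s / ((P.natDegree : ℝ) * M) := by
      rw [hcdef, norm_div]
      simp only [norm_mul, hu1, hzpow, Complex.norm_real, Real.norm_eq_abs, Complex.norm_natCast,
        abs_of_nonneg hM0.le, abs_of_nonneg hs0.le, mul_one]
    have hc1 : 1 < ‖c‖ := by
      rw [habsc]
      exact (one_lt_div hnM0).mpr hs
    set ν := (starRingEnd ℂ) c with hν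
    have hν1 : 1 < ‖ν‖ := by rwa [hν, Complex.norm_conj]
    set Gs := Q - C (ν * (M : ℂ)) with hGs
    have hGne : ∀ w : ℂ, ‖w‖ < 1 → Gs.eval w ≠ 0 := by
      intro w hw heq
      rw [hGs, eval_sub, eval_C, sub_eq_zero] at heq
      have h1 : ‖Q.eval w‖ ≤ M := hQbound w hw.le
      rw [heq, norm_mul, Complex.norm_real, Real.norm_eq_abs, abs_of_nonneg (le_of_lt hM0)] at h1
      nlinarith
    have hGdeg : Gs.natDegree ≤ P.natDegree :=
      le_trans (natDegree_sub_le _ _)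
        (max_le hQdeg (by rw [natDegree_C]; exact Nat.zero_le _))
    have hL2 := L2 Gs hGne P.natDegree hGdeg z hz1
    rw [hGs, derivative_sub, derivative_C, sub_zero, ← hGs] at hL2
    have hconj : (starRingEnd ℂ) ((P.natDegree : ℂ) * Q.eval z - z * (derivative Q).eval z)
        = (derivative P).eval z / z ^ (P.natDegree - 1) := by
      rw [hid2]
      field_simp
    have hfinal : (starRingEnd ℂ) ((P.natDegree : ℂ) * Gs.eval z - z * (derivative Q).eval z)
        = ((A : ℂ) - (s : ℂ)) * u / z ^ (P.natDegree - 1) := by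
      have hrhs : (P.natDegree : ℂ) * Gs.eval z - z * (derivative Q).eval z
          = ((P.natDegree : ℂ) * Q.eval z - z * (derivative Q).eval z)
            - (P.natDegree : ℂ) * (ν * (M : ℂ)) := by
        rw [hGs, eval_sub, eval_C]; ring
      rw [hrhs, map_sub, hconj, hPu, map_mul, map_mul, map_natCast, hν, Complex.conj_conj,
        Complex.conj_ofReal, hcdef]
      field_simp
      rw [mul_div_cancel_right₀ _ (Complex.ofReal_ne_zero.mpr hM0.ne')]
    calc B ≤ ‖(P.natDegree : ℂ) * Gs.eval z - z * (derivative Q).eval z‖ := hL2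
      _ = ‖(starRingEnd ℂ)
            ((P.natDegree : ℂ) * Gs.eval z - z * (derivative Q).eval z)‖ :=
          (Complex.norm_conj _).symm
      _ = |A - s| := by
          rw [hfinal, norm_div, norm_mul, hu1, hzpow, mul_one, div_one, ← Complex.ofReal_sub,
            Complex.norm_real, Real.norm_eq_abs]
  -- key2
  have key2 : ∀ t : ℝ, 0 ≤ t → t < (P.natDegree : ℝ) * m → A ≤ |B - t| := by
    intro t ht0 htm
    have hnmpos : 0 < (P.natDegree : ℝ) * m := lt_of_le_of_lt ht0 htm
    have hmpos : 0 < m := by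
      rcases lt_or_eq_of_le hm0 with h | h
      · exact h
      · exfalso; rw [← h, mul_zero] at hnmpos; exact lt_irrefl _ hnmpos
    have hPclosed : ∀ w : ℂ, ‖w‖ ≤ 1 → P.eval w ≠ 0 := by
      intro w hw
      rcases lt_or_eq_of_le hw with h | h
      · exact hz w h
      · intro h0
        have := hmlb w h
        rw [h0] at this
        simp at this
        linarith
    have hPmin : ∀ w : ℂ, ‖w‖ ≤ 1 → m ≤ ‖P.eval w‖ :=
      poly_minmod P m hmpos hmlb hPclosed
    obtain ⟨u, hu1, hQu⟩ := exists_unit_dir ((derivative Q).eval z)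
    rw [← hBdef] at hQu
    set c : ℂ := (t : ℂ) * u / ((P.natDegree : ℂ) * (m : ℂ) * z ^ (P.natDegree - 1)) with hcdef
    have hNne : ((P.natDegree : ℂ) * (m : ℂ) * z ^ (P.natDegree - 1)) ≠ 0 := by
      apply mul_ne_zero (mul_ne_zero ?_ ?_) hzpow0
      · exact_mod_cast Nat.cast_ne_zero.mpr hn0
      · exact_mod_cast Complex.ofReal_ne_zero.mpr (ne_of_gt hmpos)
    have habsc : ‖c‖ = t / ((P.natDegree : ℝ) * m) := by
      rw [hcdef, norm_div]
      simp only [norm_mul, hu1, hzpow, Complex.norm_real, Real.norm_eq_abs, Complex.norm_natCast,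
        abs_of_nonneg hmpos.le, abs_of_nonneg ht0, mul_one]
    have hc1 : ‖c‖ < 1 := by
      rw [habsc]
      exact (div_lt_one hnmpos).mpr htm
    set μ := (starRingEnd ℂ) c with hμ
    have hμ1 : ‖μ‖ < 1 := by rwa [hμ, Complex.norm_conj]
    set F := P - C (μ * (m : ℂ)) with hF
    have hFne : ∀ w : ℂ, ‖w‖ < 1 → F.eval w ≠ 0 := by
      intro w hw heq
      rw [hF, eval_sub, eval_C, sub_eq_zero] at heq
      have h1 : m ≤ ‖P.eval w‖ := hPmin w hw.le
      rw [heq, norm_mul, Complex.norm_real, Real.norm_eq_abs, abs_of_nonneg hmpos.le] at h1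
      nlinarith
    have hFdeg : F.natDegree ≤ P.natDegree :=
      le_trans (natDegree_sub_le _ _)
        (max_le le_rfl (by rw [natDegree_C]; exact Nat.zero_le _))
    have hdF : derivative F = derivative P := by
      rw [hF, derivative_sub, derivative_C, sub_zero]
    have hL2F := L2 F hFne P.natDegree hFdeg z hz1
    rw [hdF] at hL2F
    -- reflect identity for F
    have hrefl : reflect P.natDegree (F.map (starRingEnd ℂ))
        = Q - C ((starRingEnd ℂ) (μ * (m : ℂ))) * X ^ P.natDegree := by
      rw [hF, Polynomial.map_sub, map_C, _root_.reflect_sub, reflect_C', hQdef]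
    have hRD := reflect_deriv_eval P.natDegree F hFdeg z hz1
    rw [hrefl, hdF] at hRD
    have hDeval : eval z (derivative (Q - C ((starRingEnd ℂ) (μ * (m : ℂ))) * X ^ P.natDegree))
        = (derivative Q).eval z
          - (starRingEnd ℂ) (μ * (m : ℂ)) * (P.natDegree : ℂ) * z ^ (P.natDegree - 1) := by
      rw [derivative_sub, derivative_C_mul, derivative_X_pow]
      simp only [eval_sub, eval_mul, eval_C, eval_pow, eval_X]
      ring
    rw [hDeval] at hRD
    -- compute: conj(μ * m) * n * z^(n-1) = t * u
    have hcu : (starRingEnd ℂ) (μ * (m : ℂ)) * (P.natDegree : ℂ) * z ^ (P.natDegree - 1)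
        = (t : ℂ) * u := by
      rw [map_mul, hμ, Complex.conj_conj, Complex.conj_ofReal, hcdef]
      field_simp
      exact mul_inv_cancel_right₀ (Complex.ofReal_ne_zero.mpr hmpos.ne') _
    rw [hcu, hQu] at hRD
    -- hRD : (B:ℂ)*u - t*u = z^(n-1) * conj(n F z - z P' z)
    have habs : ‖(P.natDegree : ℂ) * F.eval z - z * (derivative P).eval z‖
        = |B - t| := by
      have := congrArg norm hRD
      rw [norm_mul, hzpow, one_mul, Complex.norm_conj] at this
      rw [← this]
      have e : (B : ℂ) * u - (t : ℂ) * u = ((B - t : ℝ) : ℂ) * u := by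
        push_cast; ring
      rw [e, norm_mul, hu1, mul_one, Complex.norm_real, Real.norm_eq_abs]
    rw [← habs]
    exact hL2F
  have hAle : A ≤ (P.natDegree : ℝ) * M := by
    by_contra h
    push_neg at h
    have hs := key1 ((A + (P.natDegree : ℝ) * M) / 2) (by linarith)
    rw [abs_of_nonneg (by linarith)] at hs
    linarith
  have hsumAB : A + B ≤ (P.natDegree : ℝ) * M := by
    by_contra h
    push_neg at h
    have hs := key1 (((P.natDegree : ℝ) * M + (A + B)) / 2) (by linarith)
    rw [abs_of_nonpos (by linarith), neg_sub] at hs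
    linarith
  by_cases hA00 : A = 0
  · rw [hA00]
    have : 0 ≤ (P.natDegree : ℝ) / 2 := by positivity
    exact mul_nonneg this (by linarith)
  have hApos : 0 < A := lt_of_le_of_ne hA0 (Ne.symm hA00)
  have hBnm : (P.natDegree : ℝ) * m ≤ B := by
    by_contra h
    push_neg at h
    have := key2 B hB0 h
    simp at this
    linarith
  have hstep : A + (P.natDegree : ℝ) * m ≤ B := by
    by_cases hnm : (P.natDegree : ℝ) * m = 0
    · rw [hnm]; simpa using hAB
    have hnmpos : 0 < (P.natDegree : ℝ) * m :=
      lt_of_le_of_ne (by positivity) (Ne.symm hnm)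
    by_contra h
    push_neg at h
    set t := (((B - A) ⊔ 0) + (P.natDegree : ℝ) * m) / 2 with htdef
    have ht0 : 0 ≤ t := by
      have : (0:ℝ) ≤ (B - A) ⊔ 0 := le_max_right _ _
      rw [htdef]; linarith
    have htsup : (B - A) ⊔ 0 < (P.natDegree : ℝ) * m := by
      rw [sup_lt_iff]; exact ⟨by linarith, hnmpos⟩
    have htm : t < (P.natDegree : ℝ) * m := by rw [htdef]; linarith
    have hkey := key2 t ht0 htm
    have h1 : B - t < A := by
      have : B - A ≤ (B - A) ⊔ 0 := le_max_left _ _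
      rw [htdef]; linarith
    have h2 : t - B < A := by
      have : t < (P.natDegree : ℝ) * m := htm
      linarith
    have habs : |B - t| < A := abs_lt.mpr ⟨by linarith, by linarith⟩
    linarith
  linarith
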